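/- In the binary icosahedral group 𝕀̃ one has s³ = t⁵ = (st)², this common element equals −1 ∈ ℍ, and the group 𝕀̃ has exactly 120 elements. -/

import Mathlib

noncomputable section

/-- The golden ratio φ = (1+√5)/2. -/
def phiGolden : ℝ := (1 + Real.sqrt 5) / 2

/-- The quaternion s = (1 + i + j + k)/2. -/
def sQuat : Quaternion ℝ := ⟨1/2, 1/2, 1/2, 1/2⟩

/-- The quaternion t = (φ + φ⁻¹·i + j)/2. -/
def tQuat : Quaternion ℝ := ⟨phiGolden / 2, phiGolden⁻¹ / 2, 1/2, 0⟩

/-- The binary icosahedral group: the subgroup of the units of the quaternions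
generated by s and t. -/
def binaryIcosahedral : Subgroup (Quaternion ℝ)ˣ :=
  Subgroup.closure {u : (Quaternion ℝ)ˣ | (u : Quaternion ℝ) = sQuat ∨ (u : Quaternion ℝ) = tQuat}


@[ext] structure K where
  a : ℚ
  b : ℚ
deriving DecidableEq

namespace K

instance : Zero K := ⟨⟨0, 0⟩⟩
instance : One K := ⟨⟨1, 0⟩⟩
instance : Add K := ⟨fun x y => ⟨x.a + y.a, x.b + y.b⟩⟩
instance : Neg K := ⟨fun x => ⟨-x.a, -x.b⟩⟩
instance : Mul K := ⟨fun x y => ⟨x.a * y.a + 5 * x.b * y.b, x.a * y.b + x.b * y.a⟩⟩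

@[simp] lemma zero_a : (0 : K).a = 0 := rfl
@[simp] lemma zero_b : (0 : K).b = 0 := rfl
@[simp] lemma one_a : (1 : K).a = 1 := rfl
@[simp] lemma one_b : (1 : K).b = 0 := rfl
@[simp] lemma add_a (x y : K) : (x + y).a = x.a + y.a := rfl
@[simp] lemma add_b (x y : K) : (x + y).b = x.b + y.b := rfl
@[simp] lemma neg_a (x : K) : (-x).a = -x.a := rfl
@[simp] lemma neg_b (x : K) : (-x).b = -x.b := rfl
@[simp] lemma mul_a (x y : K) : (x * y).a = x.a * y.a + 5 * x.b * y.b := rfl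
@[simp] lemma mul_b (x y : K) : (x * y).b = x.a * y.b + x.b * y.a := rfl

instance : CommRing K where
  add_assoc a b c := by ext <;> simp <;> ring
  zero_add a := by ext <;> simp
  add_zero a := by ext <;> simp
  add_comm a b := by ext <;> simp <;> ring
  mul_assoc a b c := by ext <;> simp <;> ring
  one_mul a := by ext <;> simp
  mul_one a := by ext <;> simp
  left_distrib a b c := by ext <;> simp <;> ring
  right_distrib a b c := by ext <;> simp <;> ring
  mul_comm a b := by ext <;> simp <;> ring
  zero_mul a := by ext <;> simp
  mul_zero a := by ext <;> simp
  neg_add_cancel a := by ext <;> simp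
  nsmul := nsmulRec
  zsmul := zsmulRec

@[simp] lemma sub_a (x y : K) : (x - y).a = x.a - y.a := by
  rw [sub_eq_add_neg, sub_eq_add_neg, add_a, neg_a]
@[simp] lemma sub_b (x y : K) : (x - y).b = x.b - y.b := by
  rw [sub_eq_add_neg, sub_eq_add_neg, add_b, neg_b]

end K

private lemma sqrt5_sq : Real.sqrt 5 * Real.sqrt 5 = 5 :=
  Real.mul_self_sqrt (by norm_num)

/-- The embedding ℚ(√5) → ℝ. -/
def Kemb : K →+* ℝ where
  toFun x := (x.a : ℝ) + (x.b : ℝ) * Real.sqrt 5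
  map_one' := by simp
  map_mul' x y := by
    push_cast [K.mul_a, K.mul_b]
    linear_combination (-(x.b * y.b) : ℝ) * sqrt5_sq
  map_zero' := by simp
  map_add' x y := by push_cast [K.add_a, K.add_b]; ring

lemma Kemb_injective : Function.Injective Kemb := by
  rw [injective_iff_map_eq_zero]
  intro z h
  have irr : Irrational (Real.sqrt 5) := by
    simpa using (by norm_num : Nat.Prime 5).irrational_sqrt
  have h' : (z.a : ℝ) + (z.b : ℝ) * Real.sqrt 5 = 0 := h
  have hb : z.b = 0 := by
    by_contra hb
    apply irr
    refine ⟨-z.a / z.b, ?_⟩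
    have hbR : (z.b : ℝ) ≠ 0 := by exact_mod_cast hb
    push_cast
    field_simp
    linarith
  have ha : z.a = 0 := by
    rw [hb] at h'
    push_cast at h'
    have : (z.a : ℝ) = 0 := by linarith
    exact_mod_cast this
  ext <;> simp [ha, hb]

/- ### Integer certificates -/

@[ext] structure V where
  ra : ℤ
  rb : ℤ
  ia : ℤ
  ib : ℤ
  ja : ℤ
  jb : ℤ
  ka : ℤ
  kb : ℤ
deriving DecidableEq

/-- `toQ4 v` is the quaternion whose coordinates are the coordinates of `v` divided by 4. -/
def toQ4 (v : V) : Quaternion K :=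
  ⟨⟨(v.ra : ℚ)/4, (v.rb : ℚ)/4⟩, ⟨(v.ia : ℚ)/4, (v.ib : ℚ)/4⟩,
   ⟨(v.ja : ℚ)/4, (v.jb : ℚ)/4⟩, ⟨(v.ka : ℚ)/4, (v.kb : ℚ)/4⟩⟩

def toQ16 (v : V) : Quaternion K :=
  ⟨⟨(v.ra : ℚ)/16, (v.rb : ℚ)/16⟩, ⟨(v.ia : ℚ)/16, (v.ib : ℚ)/16⟩,
   ⟨(v.ja : ℚ)/16, (v.jb : ℚ)/16⟩, ⟨(v.ka : ℚ)/16, (v.kb : ℚ)/16⟩⟩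

/-- Integer quaternion multiplication: if `x`, `y` are at scale 4, the result is at scale 16. -/
def vraw (x y : V) : V :=
  ⟨(x.ra*y.ra + 5*x.rb*y.rb) - (x.ia*y.ia + 5*x.ib*y.ib) - (x.ja*y.ja + 5*x.jb*y.jb)
      - (x.ka*y.ka + 5*x.kb*y.kb),
   (x.ra*y.rb + x.rb*y.ra) - (x.ia*y.ib + x.ib*y.ia) - (x.ja*y.jb + x.jb*y.ja)
      - (x.ka*y.kb + x.kb*y.ka),
   (x.ra*y.ia + 5*x.rb*y.ib) + (x.ia*y.ra + 5*x.ib*y.rb) + (x.ja*y.ka + 5*x.jb*y.kb)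
      - (x.ka*y.ja + 5*x.kb*y.jb),
   (x.ra*y.ib + x.rb*y.ia) + (x.ia*y.rb + x.ib*y.ra) + (x.ja*y.kb + x.jb*y.ka)
      - (x.ka*y.jb + x.kb*y.ja),
   (x.ra*y.ja + 5*x.rb*y.jb) - (x.ia*y.ka + 5*x.ib*y.kb) + (x.ja*y.ra + 5*x.jb*y.rb)
      + (x.ka*y.ia + 5*x.kb*y.ib),
   (x.ra*y.jb + x.rb*y.ja) - (x.ia*y.kb + x.ib*y.ka) + (x.ja*y.rb + x.jb*y.ra)
      + (x.ka*y.ib + x.kb*y.ia),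
   (x.ra*y.ka + 5*x.rb*y.kb) + (x.ia*y.ja + 5*x.ib*y.jb) - (x.ja*y.ia + 5*x.jb*y.ib)
      + (x.ka*y.ra + 5*x.kb*y.rb),
   (x.ra*y.kb + x.rb*y.ka) + (x.ia*y.jb + x.ib*y.ja) - (x.ja*y.ib + x.jb*y.ia)
      + (x.ka*y.rb + x.kb*y.ra)⟩

def vscale4 (v : V) : V := ⟨4*v.ra, 4*v.rb, 4*v.ia, 4*v.ib, 4*v.ja, 4*v.jb, 4*v.ka, 4*v.kb⟩

def starv (v : V) : V := ⟨v.ra, v.rb, -v.ia, -v.ib, -v.ja, -v.jb, -v.ka, -v.kb⟩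

set_option maxHeartbeats 1000000 in
lemma toQ16_vraw (x y : V) : toQ16 (vraw x y) = toQ4 x * toQ4 y := by
  apply Quaternion.ext <;>
    apply K.ext <;>
      simp only [Quaternion.re_mul, Quaternion.imI_mul, Quaternion.imJ_mul,
        Quaternion.imK_mul] <;> simp only [toQ16, toQ4, vraw, K.mul_a, K.mul_b, K.add_a, K.add_b, K.sub_a, K.sub_b, K.neg_a,
        K.neg_b] <;>
    push_cast <;> ring

lemma toQ16_vscale4 (v : V) : toQ16 (vscale4 v) = toQ4 v := by
  apply Quaternion.ext <;> apply K.ext <;> simp [toQ16, toQ4, vscale4] <;> push_cast <;> ring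

lemma mulQ_of_vraw {x y z : V} (h : vraw x y = vscale4 z) : toQ4 x * toQ4 y = toQ4 z := by
  rw [← toQ16_vraw, h, toQ16_vscale4]

lemma toQ4_starv (v : V) : toQ4 (starv v) = star (toQ4 v) := by
  apply Quaternion.ext <;> apply K.ext <;>
    simp only [Quaternion.re_star, Quaternion.imI_star, Quaternion.imJ_star,
      Quaternion.imK_star] <;> simp [toQ4, starv] <;> push_cast <;> ring

lemma toQ4_injective : Function.Injective toQ4 := by
  have q : ∀ a b : ℤ, (a:ℚ)/4 = (b:ℚ)/4 → a = b := by
    intro a b hab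
    have : (a:ℚ) = b := by linarith
    exact_mod_cast this
  intro x y h
  ext
  · exact q _ _ (congrArg (fun z : Quaternion K => z.re.a) h)
  · exact q _ _ (congrArg (fun z : Quaternion K => z.re.b) h)
  · exact q _ _ (congrArg (fun z : Quaternion K => z.imI.a) h)
  · exact q _ _ (congrArg (fun z : Quaternion K => z.imI.b) h)
  · exact q _ _ (congrArg (fun z : Quaternion K => z.imJ.a) h)
  · exact q _ _ (congrArg (fun z : Quaternion K => z.imJ.b) h)
  · exact q _ _ (congrArg (fun z : Quaternion K => z.imK.a) h)
  · exact q _ _ (congrArg (fun z : Quaternion K => z.imK.b) h)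

/- ### Concrete elements -/

def sv : V := ⟨2, 0, 2, 0, 2, 0, 2, 0⟩
def tv : V := ⟨1, 1, -1, 1, 2, 0, 0, 0⟩
def vone : V := ⟨4, 0, 0, 0, 0, 0, 0, 0⟩
def vm1 : V := ⟨-4, 0, 0, 0, 0, 0, 0, 0⟩
def v_s2 : V := ⟨-2, 0, 2, 0, 2, 0, 2, 0⟩
def v_t2 : V := ⟨-1, 1, 2, 0, 1, 1, 0, 0⟩
def v_t3 : V := ⟨1, -1, 2, 0, 1, 1, 0, 0⟩
def v_t4 : V := ⟨-1, -1, -1, 1, 2, 0, 0, 0⟩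
def v_st : V := ⟨0, 0, -1, 1, 1, 1, 2, 0⟩

def sK : Quaternion K := toQ4 sv
def tK : Quaternion K := toQ4 tv

lemma toQ4_vone : toQ4 vone = 1 := by
  apply Quaternion.ext <;> apply K.ext <;> simp [toQ4, vone, Quaternion.re_one, Quaternion.imI_one, Quaternion.imJ_one, Quaternion.imK_one] <;> norm_num

lemma toQ4_vm1 : toQ4 vm1 = -1 := by
  apply Quaternion.ext <;> apply K.ext <;> simp [toQ4, vm1, Quaternion.re_one, Quaternion.imI_one, Quaternion.imJ_one, Quaternion.imK_one] <;> norm_num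

lemma sK_mul_star : sK * star sK = 1 := by
  have h : sK * toQ4 (starv sv) = toQ4 vone := mulQ_of_vraw (by decide +kernel)
  rw [toQ4_starv, toQ4_vone] at h
  exact h
lemma sK_star_mul : star sK * sK = 1 := by
  have h : toQ4 (starv sv) * sK = toQ4 vone := mulQ_of_vraw (by decide +kernel)
  rw [toQ4_starv, toQ4_vone] at h
  exact h
lemma tK_mul_star : tK * star tK = 1 := by
  have h : tK * toQ4 (starv tv) = toQ4 vone := mulQ_of_vraw (by decide +kernel)
  rw [toQ4_starv, toQ4_vone] at h
  exact h
lemma tK_star_mul : star tK * tK = 1 := by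
  have h : toQ4 (starv tv) * tK = toQ4 vone := mulQ_of_vraw (by decide +kernel)
  rw [toQ4_starv, toQ4_vone] at h
  exact h

def sU : (Quaternion K)ˣ := ⟨sK, star sK, sK_mul_star, sK_star_mul⟩
def tU : (Quaternion K)ˣ := ⟨tK, star tK, tK_mul_star, tK_star_mul⟩

/- ### The relations s³ = t⁵ = (st)² = -1 at the level of ℚ(√5). -/

lemma sK_pow : sK ^ 3 = -1 := by
  have h1 : sK * sK = toQ4 v_s2 := mulQ_of_vraw (by decide +kernel)
  have h2 : toQ4 v_s2 * sK = toQ4 vm1 := mulQ_of_vraw (by decide +kernel)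
  rw [pow_succ, pow_succ, pow_one, h1, h2, toQ4_vm1]

lemma tK_pow : tK ^ 5 = -1 := by
  have h1 : tK * tK = toQ4 v_t2 := mulQ_of_vraw (by decide +kernel)
  have h2 : toQ4 v_t2 * tK = toQ4 v_t3 := mulQ_of_vraw (by decide +kernel)
  have h3 : toQ4 v_t3 * tK = toQ4 v_t4 := mulQ_of_vraw (by decide +kernel)
  have h4 : toQ4 v_t4 * tK = toQ4 vm1 := mulQ_of_vraw (by decide +kernel)
  rw [pow_succ, pow_succ, pow_succ, pow_succ, pow_one, h1, h2, h3, h4, toQ4_vm1]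

lemma stK_pow : (sK * tK) ^ 2 = -1 := by
  have h1 : sK * tK = toQ4 v_st := mulQ_of_vraw (by decide +kernel)
  have h2 : toQ4 v_st * toQ4 v_st = toQ4 vm1 := mulQ_of_vraw (by decide +kernel)
  rw [sq, h1, h2, toQ4_vm1]

instance : DecidableEq (Quaternion K) := fun x y =>
  decidable_of_iff (x.re = y.re ∧ x.imI = y.imI ∧ x.imJ = y.imJ ∧ x.imK = y.imK)
    ⟨fun ⟨h1, h2, h3, h4⟩ => Quaternion.ext _ _ h1 h2 h3 h4,
     fun h => by subst h; exact ⟨rfl, rfl, rfl, rfl⟩⟩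

/-- The induced ring embedding ℍ[ℚ(√5)] → ℍ[ℝ]. -/
def Phi : Quaternion K →+* Quaternion ℝ where
  toFun q := ⟨Kemb q.re, Kemb q.imI, Kemb q.imJ, Kemb q.imK⟩
  map_one' := by apply Quaternion.ext <;> simp [Quaternion.re_one, Quaternion.imI_one, Quaternion.imJ_one, Quaternion.imK_one]
  map_zero' := by apply Quaternion.ext <;> simp [Quaternion.re_zero, Quaternion.imI_zero, Quaternion.imJ_zero, Quaternion.imK_zero]
  map_add' x y := by
    apply Quaternion.ext
    · simp; refine ((Quaternion.re_add (R := ℝ) _ _).trans ?_).symm; rfl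
    · simp; refine ((Quaternion.imI_add (R := ℝ) _ _).trans ?_).symm; rfl
    · simp; refine ((Quaternion.imJ_add (R := ℝ) _ _).trans ?_).symm; rfl
    · simp; refine ((Quaternion.imK_add (R := ℝ) _ _).trans ?_).symm; rfl
  map_mul' x y := by
    apply Quaternion.ext
    · simp [Quaternion.re_mul]; refine ((Quaternion.re_mul (R := ℝ) _ _).trans ?_).symm; rfl
    · simp [Quaternion.imI_mul]; refine ((Quaternion.imI_mul (R := ℝ) _ _).trans ?_).symm; rfl
    · simp [Quaternion.imJ_mul]; refine ((Quaternion.imJ_mul (R := ℝ) _ _).trans ?_).symm; rfl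
    · simp [Quaternion.imK_mul]; refine ((Quaternion.imK_mul (R := ℝ) _ _).trans ?_).symm; rfl

lemma Phi_injective : Function.Injective Phi := by
  intro x y h
  have h1 := congrArg QuaternionAlgebra.re h
  have h2 := congrArg QuaternionAlgebra.imI h
  have h3 := congrArg QuaternionAlgebra.imJ h
  have h4 := congrArg QuaternionAlgebra.imK h
  exact Quaternion.ext _ _ (Kemb_injective h1) (Kemb_injective h2) (Kemb_injective h3)
    (Kemb_injective h4)

lemma phiGolden_inv : phiGolden⁻¹ = (Real.sqrt 5 - 1) / 2 := by
  apply inv_eq_of_mul_eq_one_right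
  rw [phiGolden]
  linear_combination (1/4 : ℝ) * sqrt5_sq

lemma Phi_re (q : Quaternion K) : (Phi q).re = Kemb q.re := rfl
lemma Phi_imI (q : Quaternion K) : (Phi q).imI = Kemb q.imI := rfl
lemma Phi_imJ (q : Quaternion K) : (Phi q).imJ = Kemb q.imJ := rfl
lemma Phi_imK (q : Quaternion K) : (Phi q).imK = Kemb q.imK := rfl

lemma Phi_sK : Phi sK = sQuat := by
  apply Quaternion.ext <;>
    simp only [Phi_re, Phi_imI, Phi_imJ, Phi_imK] <;> simp [Kemb, sK, sv, toQ4, sQuat] <;> norm_num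

lemma Phi_tK : Phi tK = tQuat := by
  apply Quaternion.ext
  · simp only [Phi_re, Phi_imI, Phi_imJ, Phi_imK] <;> simp [Kemb, tK, tv, toQ4, tQuat, phiGolden]
    push_cast
    ring
  · simp only [Phi_re, Phi_imI, Phi_imJ, Phi_imK] <;> simp [Kemb, tK, tv, toQ4, tQuat, phiGolden_inv]
    push_cast
    ring
  · simp only [Phi_re, Phi_imI, Phi_imJ, Phi_imK] <;> simp [Kemb, tK, tv, toQ4, tQuat]
    norm_num
  · simp only [Phi_re, Phi_imI, Phi_imJ, Phi_imK] <;> simp [Kemb, tK, tv, toQ4, tQuat]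

def stepsList_0 : List (V × Bool × V) := [(⟨4, 0, 0, 0, 0, 0, 0, 0⟩, true, ⟨2, 0, 2, 0, 2, 0, 2, 0⟩),
  (⟨4, 0, 0, 0, 0, 0, 0, 0⟩, false, ⟨1, 1, -1, 1, 2, 0, 0, 0⟩),
  (⟨2, 0, 2, 0, 2, 0, 2, 0⟩, true, ⟨-2, 0, 2, 0, 2, 0, 2, 0⟩),
  (⟨2, 0, 2, 0, 2, 0, 2, 0⟩, false, ⟨0, 0, -1, 1, 1, 1, 2, 0⟩),
  (⟨1, 1, -1, 1, 2, 0, 0, 0⟩, true, ⟨0, 0, 1, 1, 2, 0, -1, 1⟩),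
  (⟨1, 1, -1, 1, 2, 0, 0, 0⟩, false, ⟨-1, 1, 2, 0, 1, 1, 0, 0⟩),
  (⟨-2, 0, 2, 0, 2, 0, 2, 0⟩, true, ⟨-4, 0, 0, 0, 0, 0, 0, 0⟩),
  (⟨-2, 0, 2, 0, 2, 0, 2, 0⟩, false, ⟨-1, -1, 0, 0, -1, 1, 2, 0⟩),
  (⟨0, 0, -1, 1, 1, 1, 2, 0⟩, true, ⟨-1, -1, -1, 1, 2, 0, 0, 0⟩),
  (⟨0, 0, -1, 1, 1, 1, 2, 0⟩, false, ⟨-2, 0, 0, 0, 1, 1, -1, 1⟩),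
  (⟨0, 0, 1, 1, 2, 0, -1, 1⟩, true, ⟨-1, -1, 2, 0, 0, 0, -1, 1⟩),
  (⟨-1, 1, 2, 0, 1, 1, 0, 0⟩, true, ⟨-2, 0, 1, 1, -1, 1, 0, 0⟩),
  (⟨-1, 1, 2, 0, 1, 1, 0, 0⟩, false, ⟨1, -1, 2, 0, 1, 1, 0, 0⟩),
  (⟨-4, 0, 0, 0, 0, 0, 0, 0⟩, true, ⟨-2, 0, -2, 0, -2, 0, -2, 0⟩),
  (⟨-4, 0, 0, 0, 0, 0, 0, 0⟩, false, ⟨-1, -1, 1, -1, -2, 0, 0, 0⟩)]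

def stepsList_1 : List (V × Bool × V) := [(⟨-1, -1, 0, 0, -1, 1, 2, 0⟩, true, ⟨-1, -1, -2, 0, 0, 0, 1, -1⟩),
  (⟨-1, -1, 0, 0, -1, 1, 2, 0⟩, false, ⟨-1, -1, -2, 0, 0, 0, -1, 1⟩),
  (⟨-1, -1, -1, 1, 2, 0, 0, 0⟩, true, ⟨-1, -1, 0, 0, 1, -1, -2, 0⟩),
  (⟨-2, 0, 0, 0, 1, 1, -1, 1⟩, true, ⟨-1, -1, 0, 0, -1, 1, -2, 0⟩),
  (⟨-2, 0, 0, 0, 1, 1, -1, 1⟩, false, ⟨-1, -1, 1, -1, 2, 0, 0, 0⟩),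
  (⟨-1, -1, 2, 0, 0, 0, -1, 1⟩, false, ⟨-1, -1, 0, 0, 1, -1, 2, 0⟩),
  (⟨-2, 0, 1, 1, -1, 1, 0, 0⟩, true, ⟨-1, -1, -1, 1, -2, 0, 0, 0⟩),
  (⟨1, -1, 2, 0, 1, 1, 0, 0⟩, true, ⟨-1, -1, 2, 0, 0, 0, 1, -1⟩),
  (⟨-2, 0, -2, 0, -2, 0, -2, 0⟩, true, ⟨2, 0, -2, 0, -2, 0, -2, 0⟩),
  (⟨-2, 0, -2, 0, -2, 0, -2, 0⟩, false, ⟨0, 0, 1, -1, -1, -1, -2, 0⟩),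
  (⟨-1, -1, 1, -1, -2, 0, 0, 0⟩, true, ⟨0, 0, -1, -1, -2, 0, 1, -1⟩),
  (⟨-1, -1, 1, -1, -2, 0, 0, 0⟩, false, ⟨1, -1, -2, 0, -1, -1, 0, 0⟩),
  (⟨-1, -1, -2, 0, 0, 0, 1, -1⟩, true, ⟨0, 0, -2, 0, 1, -1, -1, -1⟩),
  (⟨-1, -1, -2, 0, 0, 0, -1, 1⟩, true, ⟨1, -1, -1, -1, 0, 0, -2, 0⟩),
  (⟨-1, -1, -2, 0, 0, 0, -1, 1⟩, false, ⟨-2, 0, -1, -1, 1, -1, 0, 0⟩)]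

def stepsList_2 : List (V × Bool × V) := [(⟨-1, -1, 0, 0, 1, -1, -2, 0⟩, false, ⟨-2, 0, 0, 0, -1, -1, 1, -1⟩),
  (⟨-1, -1, 0, 0, -1, 1, -2, 0⟩, true, ⟨1, -1, 0, 0, -2, 0, -1, -1⟩),
  (⟨-1, -1, 1, -1, 2, 0, 0, 0⟩, true, ⟨-2, 0, 1, -1, 0, 0, -1, -1⟩),
  (⟨-1, -1, 0, 0, 1, -1, 2, 0⟩, false, ⟨-2, 0, -2, 0, -2, 0, 2, 0⟩),
  (⟨-1, -1, -1, 1, -2, 0, 0, 0⟩, false, ⟨-2, 0, 0, 0, -1, -1, -1, 1⟩),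
  (⟨2, 0, -2, 0, -2, 0, -2, 0⟩, false, ⟨1, 1, 0, 0, 1, -1, -2, 0⟩),
  (⟨0, 0, 1, -1, -1, -1, -2, 0⟩, true, ⟨1, 1, 1, -1, -2, 0, 0, 0⟩),
  (⟨0, 0, 1, -1, -1, -1, -2, 0⟩, false, ⟨2, 0, 0, 0, -1, -1, 1, -1⟩),
  (⟨0, 0, -1, -1, -2, 0, 1, -1⟩, true, ⟨1, 1, -2, 0, 0, 0, 1, -1⟩),
  (⟨1, -1, -2, 0, -1, -1, 0, 0⟩, true, ⟨2, 0, -1, -1, 1, -1, 0, 0⟩),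
  (⟨1, -1, -2, 0, -1, -1, 0, 0⟩, false, ⟨-1, 1, -2, 0, -1, -1, 0, 0⟩),
  (⟨0, 0, -2, 0, 1, -1, -1, -1⟩, false, ⟨-1, 1, 0, 0, -2, 0, -1, -1⟩),
  (⟨1, -1, -1, -1, 0, 0, -2, 0⟩, true, ⟨2, 0, 1, -1, 0, 0, -1, -1⟩),
  (⟨-2, 0, -1, -1, 1, -1, 0, 0⟩, true, ⟨-1, 1, -1, -1, 0, 0, -2, 0⟩),
  (⟨-2, 0, 0, 0, -1, -1, 1, -1⟩, false, ⟨0, 0, 0, 0, -4, 0, 0, 0⟩)]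

def stepsList_3 : List (V × Bool × V) := [(⟨1, -1, 0, 0, -2, 0, -1, -1⟩, false, ⟨0, 0, -1, 1, -1, -1, -2, 0⟩),
  (⟨-2, 0, -2, 0, -2, 0, 2, 0⟩, true, ⟨0, 0, -4, 0, 0, 0, 0, 0⟩),
  (⟨-2, 0, -2, 0, -2, 0, 2, 0⟩, false, ⟨0, 0, -1, -1, -2, 0, -1, 1⟩),
  (⟨-2, 0, 0, 0, -1, -1, -1, 1⟩, false, ⟨0, 0, 1, -1, -1, -1, 2, 0⟩),
  (⟨1, 1, 0, 0, 1, -1, -2, 0⟩, true, ⟨1, 1, 2, 0, 0, 0, -1, 1⟩),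
  (⟨1, 1, 0, 0, 1, -1, -2, 0⟩, false, ⟨1, 1, 2, 0, 0, 0, 1, -1⟩),
  (⟨1, 1, 1, -1, -2, 0, 0, 0⟩, true, ⟨1, 1, 0, 0, -1, 1, 2, 0⟩),
  (⟨2, 0, 0, 0, -1, -1, 1, -1⟩, true, ⟨1, 1, 0, 0, 1, -1, 2, 0⟩),
  (⟨2, 0, 0, 0, -1, -1, 1, -1⟩, false, ⟨1, 1, -1, 1, -2, 0, 0, 0⟩),
  (⟨1, 1, -2, 0, 0, 0, 1, -1⟩, false, ⟨1, 1, 0, 0, -1, 1, -2, 0⟩),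
  (⟨2, 0, -1, -1, 1, -1, 0, 0⟩, true, ⟨1, 1, 1, -1, 2, 0, 0, 0⟩),
  (⟨-1, 1, -2, 0, -1, -1, 0, 0⟩, true, ⟨1, 1, -2, 0, 0, 0, -1, 1⟩),
  (⟨-1, 1, 0, 0, -2, 0, -1, -1⟩, false, ⟨2, 0, 2, 0, -2, 0, -2, 0⟩),
  (⟨2, 0, 1, -1, 0, 0, -1, -1⟩, false, ⟨2, 0, -1, 1, 0, 0, -1, -1⟩),
  (⟨0, 0, 0, 0, -4, 0, 0, 0⟩, true, ⟨2, 0, -2, 0, -2, 0, 2, 0⟩)]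

def stepsList_4 : List (V × Bool × V) := [(⟨0, 0, 0, 0, -4, 0, 0, 0⟩, false, ⟨2, 0, 0, 0, -1, -1, -1, 1⟩),
  (⟨0, 0, -1, 1, -1, -1, -2, 0⟩, false, ⟨-1, 1, 2, 0, -1, -1, 0, 0⟩),
  (⟨0, 0, -4, 0, 0, 0, 0, 0⟩, true, ⟨2, 0, -2, 0, 2, 0, -2, 0⟩),
  (⟨0, 0, -1, -1, -2, 0, -1, 1⟩, true, ⟨2, 0, -1, -1, -1, 1, 0, 0⟩),
  (⟨0, 0, 1, -1, -1, -1, 2, 0⟩, true, ⟨-1, 1, -1, -1, 0, 0, 2, 0⟩),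
  (⟨1, 1, 2, 0, 0, 0, -1, 1⟩, true, ⟨0, 0, 2, 0, -1, 1, 1, 1⟩),
  (⟨1, 1, 2, 0, 0, 0, 1, -1⟩, true, ⟨-1, 1, 1, 1, 0, 0, 2, 0⟩),
  (⟨1, 1, 2, 0, 0, 0, 1, -1⟩, false, ⟨2, 0, 1, 1, -1, 1, 0, 0⟩),
  (⟨1, 1, 0, 0, -1, 1, 2, 0⟩, false, ⟨2, 0, 0, 0, 1, 1, -1, 1⟩),
  (⟨1, 1, 0, 0, 1, -1, 2, 0⟩, true, ⟨-1, 1, 0, 0, 2, 0, 1, 1⟩),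
  (⟨1, 1, -1, 1, -2, 0, 0, 0⟩, true, ⟨2, 0, -1, 1, 0, 0, 1, 1⟩),
  (⟨1, 1, 0, 0, -1, 1, -2, 0⟩, false, ⟨2, 0, 2, 0, 2, 0, -2, 0⟩),
  (⟨1, 1, 1, -1, 2, 0, 0, 0⟩, false, ⟨2, 0, 0, 0, 1, 1, 1, -1⟩),
  (⟨2, 0, 2, 0, -2, 0, -2, 0⟩, true, ⟨2, 0, 2, 0, -2, 0, 2, 0⟩),
  (⟨2, 0, 2, 0, -2, 0, -2, 0⟩, false, ⟨2, 0, 1, 1, 1, -1, 0, 0⟩)]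

def stepsList_5 : List (V × Bool × V) := [(⟨2, 0, -1, 1, 0, 0, -1, -1⟩, false, ⟨-1, 1, 1, 1, 0, 0, -2, 0⟩),
  (⟨2, 0, -2, 0, -2, 0, 2, 0⟩, true, ⟨2, 0, -2, 0, 2, 0, 2, 0⟩),
  (⟨2, 0, 0, 0, -1, -1, -1, 1⟩, true, ⟨2, 0, 1, -1, 0, 0, 1, 1⟩),
  (⟨-1, 1, 2, 0, -1, -1, 0, 0⟩, true, ⟨-1, 1, 0, 0, -2, 0, 1, 1⟩),
  (⟨2, 0, -2, 0, 2, 0, -2, 0⟩, false, ⟨-1, 1, 0, 0, 2, 0, -1, -1⟩),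
  (⟨-1, 1, -1, -1, 0, 0, 2, 0⟩, true, ⟨-1, 1, -2, 0, 1, 1, 0, 0⟩),
  (⟨0, 0, 2, 0, -1, 1, 1, 1⟩, false, ⟨1, -1, 0, 0, 2, 0, 1, 1⟩),
  (⟨-1, 1, 1, 1, 0, 0, 2, 0⟩, true, ⟨-2, 0, -1, 1, 0, 0, 1, 1⟩),
  (⟨2, 0, 1, 1, -1, 1, 0, 0⟩, true, ⟨1, -1, 1, 1, 0, 0, 2, 0⟩),
  (⟨2, 0, 0, 0, 1, 1, -1, 1⟩, false, ⟨0, 0, 0, 0, 4, 0, 0, 0⟩),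
  (⟨-1, 1, 0, 0, 2, 0, 1, 1⟩, false, ⟨0, 0, 1, -1, 1, 1, 2, 0⟩),
  (⟨2, 0, 2, 0, 2, 0, -2, 0⟩, true, ⟨0, 0, 4, 0, 0, 0, 0, 0⟩),
  (⟨2, 0, 2, 0, 2, 0, -2, 0⟩, false, ⟨0, 0, 1, 1, 2, 0, 1, -1⟩),
  (⟨2, 0, 0, 0, 1, 1, 1, -1⟩, false, ⟨0, 0, -1, 1, 1, 1, -2, 0⟩),
  (⟨2, 0, 2, 0, -2, 0, 2, 0⟩, true, ⟨0, 0, 0, 0, 0, 0, 4, 0⟩)]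

def stepsList_6 : List (V × Bool × V) := [(⟨2, 0, 1, 1, 1, -1, 0, 0⟩, true, ⟨0, 0, 2, 0, 1, -1, 1, 1⟩),
  (⟨-1, 1, 1, 1, 0, 0, -2, 0⟩, true, ⟨0, 0, 1, 1, -2, 0, -1, 1⟩),
  (⟨-1, 1, 0, 0, -2, 0, 1, 1⟩, true, ⟨0, 0, -2, 0, -1, 1, 1, 1⟩),
  (⟨-1, 1, 0, 0, 2, 0, -1, -1⟩, false, ⟨0, 0, 2, 0, -1, 1, -1, -1⟩),
  (⟨-1, 1, -2, 0, 1, 1, 0, 0⟩, false, ⟨0, 0, 1, -1, 1, 1, -2, 0⟩),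
  (⟨1, -1, 0, 0, 2, 0, 1, 1⟩, false, ⟨-2, 0, -2, 0, 2, 0, 2, 0⟩),
  (⟨-2, 0, -1, 1, 0, 0, 1, 1⟩, false, ⟨-2, 0, 1, -1, 0, 0, 1, 1⟩),
  (⟨0, 0, 0, 0, 4, 0, 0, 0⟩, true, ⟨-2, 0, 2, 0, 2, 0, -2, 0⟩),
  (⟨0, 0, 0, 0, 4, 0, 0, 0⟩, false, ⟨-2, 0, 0, 0, 1, 1, 1, -1⟩),
  (⟨0, 0, 1, -1, 1, 1, 2, 0⟩, false, ⟨1, -1, -2, 0, 1, 1, 0, 0⟩),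
  (⟨0, 0, 4, 0, 0, 0, 0, 0⟩, true, ⟨-2, 0, 2, 0, -2, 0, 2, 0⟩),
  (⟨0, 0, 1, 1, 2, 0, 1, -1⟩, true, ⟨-2, 0, 1, 1, 1, -1, 0, 0⟩),
  (⟨0, 0, -1, 1, 1, 1, -2, 0⟩, true, ⟨1, -1, 1, 1, 0, 0, -2, 0⟩),
  (⟨0, 0, 1, 1, -2, 0, -1, 1⟩, true, ⟨1, -1, 0, 0, -2, 0, 1, 1⟩),
  (⟨0, 0, -2, 0, -1, 1, 1, 1⟩, false, ⟨0, 0, -1, -1, 2, 0, -1, 1⟩)]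

def stepsList_7 : List (V × Bool × V) := [(⟨0, 0, 2, 0, -1, 1, -1, -1⟩, true, ⟨0, 0, 1, 1, -2, 0, 1, -1⟩),
  (⟨0, 0, 1, -1, 1, 1, -2, 0⟩, false, ⟨1, -1, 0, 0, 2, 0, -1, -1⟩),
  (⟨-2, 0, -2, 0, 2, 0, 2, 0⟩, true, ⟨-2, 0, -2, 0, 2, 0, -2, 0⟩),
  (⟨-2, 0, -2, 0, 2, 0, 2, 0⟩, false, ⟨-2, 0, -1, -1, -1, 1, 0, 0⟩),
  (⟨-2, 0, 1, -1, 0, 0, 1, 1⟩, false, ⟨1, -1, -1, -1, 0, 0, 2, 0⟩),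
  (⟨-2, 0, 2, 0, 2, 0, -2, 0⟩, true, ⟨-2, 0, 2, 0, -2, 0, -2, 0⟩),
  (⟨-2, 0, 0, 0, 1, 1, 1, -1⟩, true, ⟨-2, 0, -1, 1, 0, 0, -1, -1⟩),
  (⟨1, -1, 1, 1, 0, 0, -2, 0⟩, true, ⟨1, -1, 2, 0, -1, -1, 0, 0⟩),
  (⟨1, -1, 0, 0, -2, 0, 1, 1⟩, false, ⟨0, 0, -2, 0, 1, -1, 1, 1⟩),
  (⟨0, 0, -1, -1, 2, 0, -1, 1⟩, false, ⟨0, 0, -1, -1, 2, 0, 1, -1⟩),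
  (⟨0, 0, 1, 1, -2, 0, 1, -1⟩, true, ⟨0, 0, -1, 1, -1, -1, 2, 0⟩),
  (⟨1, -1, 0, 0, 2, 0, -1, -1⟩, true, ⟨0, 0, 2, 0, 1, -1, -1, -1⟩),
  (⟨-2, 0, -2, 0, 2, 0, -2, 0⟩, true, ⟨0, 0, 0, 0, 0, 0, -4, 0⟩),
  (⟨-2, 0, -1, -1, -1, 1, 0, 0⟩, true, ⟨0, 0, -2, 0, -1, 1, -1, -1⟩)]

def stepsList : List (V × Bool × V) := stepsList_0 ++ stepsList_1 ++ stepsList_2 ++ stepsList_3 ++ stepsList_4 ++ stepsList_5 ++ stepsList_6 ++ stepsList_7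

def Lv_0 : List V := [⟨4, 0, 0, 0, 0, 0, 0, 0⟩,
  ⟨2, 0, 2, 0, 2, 0, 2, 0⟩,
  ⟨1, 1, -1, 1, 2, 0, 0, 0⟩,
  ⟨-2, 0, 2, 0, 2, 0, 2, 0⟩,
  ⟨0, 0, -1, 1, 1, 1, 2, 0⟩,
  ⟨0, 0, 1, 1, 2, 0, -1, 1⟩,
  ⟨-1, 1, 2, 0, 1, 1, 0, 0⟩,
  ⟨-4, 0, 0, 0, 0, 0, 0, 0⟩,
  ⟨-1, -1, 0, 0, -1, 1, 2, 0⟩,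
  ⟨-1, -1, -1, 1, 2, 0, 0, 0⟩,
  ⟨-2, 0, 0, 0, 1, 1, -1, 1⟩,
  ⟨-1, -1, 2, 0, 0, 0, -1, 1⟩,
  ⟨-2, 0, 1, 1, -1, 1, 0, 0⟩,
  ⟨1, -1, 2, 0, 1, 1, 0, 0⟩,
  ⟨-2, 0, -2, 0, -2, 0, -2, 0⟩]

def Lv_1 : List V := [⟨-1, -1, 1, -1, -2, 0, 0, 0⟩,
  ⟨-1, -1, -2, 0, 0, 0, 1, -1⟩,
  ⟨-1, -1, -2, 0, 0, 0, -1, 1⟩,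
  ⟨-1, -1, 0, 0, 1, -1, -2, 0⟩,
  ⟨-1, -1, 0, 0, -1, 1, -2, 0⟩,
  ⟨-1, -1, 1, -1, 2, 0, 0, 0⟩,
  ⟨-1, -1, 0, 0, 1, -1, 2, 0⟩,
  ⟨-1, -1, -1, 1, -2, 0, 0, 0⟩,
  ⟨-1, -1, 2, 0, 0, 0, 1, -1⟩,
  ⟨2, 0, -2, 0, -2, 0, -2, 0⟩,
  ⟨0, 0, 1, -1, -1, -1, -2, 0⟩,
  ⟨0, 0, -1, -1, -2, 0, 1, -1⟩,
  ⟨1, -1, -2, 0, -1, -1, 0, 0⟩,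
  ⟨0, 0, -2, 0, 1, -1, -1, -1⟩,
  ⟨1, -1, -1, -1, 0, 0, -2, 0⟩]

def Lv_2 : List V := [⟨-2, 0, -1, -1, 1, -1, 0, 0⟩,
  ⟨-2, 0, 0, 0, -1, -1, 1, -1⟩,
  ⟨1, -1, 0, 0, -2, 0, -1, -1⟩,
  ⟨-2, 0, 1, -1, 0, 0, -1, -1⟩,
  ⟨-2, 0, -2, 0, -2, 0, 2, 0⟩,
  ⟨-2, 0, 0, 0, -1, -1, -1, 1⟩,
  ⟨1, 1, 0, 0, 1, -1, -2, 0⟩,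
  ⟨1, 1, 1, -1, -2, 0, 0, 0⟩,
  ⟨2, 0, 0, 0, -1, -1, 1, -1⟩,
  ⟨1, 1, -2, 0, 0, 0, 1, -1⟩,
  ⟨2, 0, -1, -1, 1, -1, 0, 0⟩,
  ⟨-1, 1, -2, 0, -1, -1, 0, 0⟩,
  ⟨-1, 1, 0, 0, -2, 0, -1, -1⟩,
  ⟨2, 0, 1, -1, 0, 0, -1, -1⟩,
  ⟨-1, 1, -1, -1, 0, 0, -2, 0⟩]

def Lv_3 : List V := [⟨0, 0, 0, 0, -4, 0, 0, 0⟩,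
  ⟨0, 0, -1, 1, -1, -1, -2, 0⟩,
  ⟨0, 0, -4, 0, 0, 0, 0, 0⟩,
  ⟨0, 0, -1, -1, -2, 0, -1, 1⟩,
  ⟨0, 0, 1, -1, -1, -1, 2, 0⟩,
  ⟨1, 1, 2, 0, 0, 0, -1, 1⟩,
  ⟨1, 1, 2, 0, 0, 0, 1, -1⟩,
  ⟨1, 1, 0, 0, -1, 1, 2, 0⟩,
  ⟨1, 1, 0, 0, 1, -1, 2, 0⟩,
  ⟨1, 1, -1, 1, -2, 0, 0, 0⟩,
  ⟨1, 1, 0, 0, -1, 1, -2, 0⟩,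
  ⟨1, 1, 1, -1, 2, 0, 0, 0⟩,
  ⟨1, 1, -2, 0, 0, 0, -1, 1⟩,
  ⟨2, 0, 2, 0, -2, 0, -2, 0⟩,
  ⟨2, 0, -1, 1, 0, 0, -1, -1⟩]

def Lv_4 : List V := [⟨2, 0, -2, 0, -2, 0, 2, 0⟩,
  ⟨2, 0, 0, 0, -1, -1, -1, 1⟩,
  ⟨-1, 1, 2, 0, -1, -1, 0, 0⟩,
  ⟨2, 0, -2, 0, 2, 0, -2, 0⟩,
  ⟨2, 0, -1, -1, -1, 1, 0, 0⟩,
  ⟨-1, 1, -1, -1, 0, 0, 2, 0⟩,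
  ⟨0, 0, 2, 0, -1, 1, 1, 1⟩,
  ⟨-1, 1, 1, 1, 0, 0, 2, 0⟩,
  ⟨2, 0, 1, 1, -1, 1, 0, 0⟩,
  ⟨2, 0, 0, 0, 1, 1, -1, 1⟩,
  ⟨-1, 1, 0, 0, 2, 0, 1, 1⟩,
  ⟨2, 0, -1, 1, 0, 0, 1, 1⟩,
  ⟨2, 0, 2, 0, 2, 0, -2, 0⟩,
  ⟨2, 0, 0, 0, 1, 1, 1, -1⟩,
  ⟨2, 0, 2, 0, -2, 0, 2, 0⟩]

def Lv_5 : List V := [⟨2, 0, 1, 1, 1, -1, 0, 0⟩,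
  ⟨-1, 1, 1, 1, 0, 0, -2, 0⟩,
  ⟨2, 0, -2, 0, 2, 0, 2, 0⟩,
  ⟨2, 0, 1, -1, 0, 0, 1, 1⟩,
  ⟨-1, 1, 0, 0, -2, 0, 1, 1⟩,
  ⟨-1, 1, 0, 0, 2, 0, -1, -1⟩,
  ⟨-1, 1, -2, 0, 1, 1, 0, 0⟩,
  ⟨1, -1, 0, 0, 2, 0, 1, 1⟩,
  ⟨-2, 0, -1, 1, 0, 0, 1, 1⟩,
  ⟨1, -1, 1, 1, 0, 0, 2, 0⟩,
  ⟨0, 0, 0, 0, 4, 0, 0, 0⟩,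
  ⟨0, 0, 1, -1, 1, 1, 2, 0⟩,
  ⟨0, 0, 4, 0, 0, 0, 0, 0⟩,
  ⟨0, 0, 1, 1, 2, 0, 1, -1⟩,
  ⟨0, 0, -1, 1, 1, 1, -2, 0⟩]

def Lv_6 : List V := [⟨0, 0, 0, 0, 0, 0, 4, 0⟩,
  ⟨0, 0, 2, 0, 1, -1, 1, 1⟩,
  ⟨0, 0, 1, 1, -2, 0, -1, 1⟩,
  ⟨0, 0, -2, 0, -1, 1, 1, 1⟩,
  ⟨0, 0, 2, 0, -1, 1, -1, -1⟩,
  ⟨0, 0, 1, -1, 1, 1, -2, 0⟩,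
  ⟨-2, 0, -2, 0, 2, 0, 2, 0⟩,
  ⟨-2, 0, 1, -1, 0, 0, 1, 1⟩,
  ⟨-2, 0, 2, 0, 2, 0, -2, 0⟩,
  ⟨-2, 0, 0, 0, 1, 1, 1, -1⟩,
  ⟨1, -1, -2, 0, 1, 1, 0, 0⟩,
  ⟨-2, 0, 2, 0, -2, 0, 2, 0⟩,
  ⟨-2, 0, 1, 1, 1, -1, 0, 0⟩,
  ⟨1, -1, 1, 1, 0, 0, -2, 0⟩,
  ⟨1, -1, 0, 0, -2, 0, 1, 1⟩]

def Lv_7 : List V := [⟨0, 0, -1, -1, 2, 0, -1, 1⟩,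
  ⟨0, 0, 1, 1, -2, 0, 1, -1⟩,
  ⟨1, -1, 0, 0, 2, 0, -1, -1⟩,
  ⟨-2, 0, -2, 0, 2, 0, -2, 0⟩,
  ⟨-2, 0, -1, -1, -1, 1, 0, 0⟩,
  ⟨1, -1, -1, -1, 0, 0, 2, 0⟩,
  ⟨-2, 0, 2, 0, -2, 0, -2, 0⟩,
  ⟨-2, 0, -1, 1, 0, 0, -1, -1⟩,
  ⟨1, -1, 2, 0, -1, -1, 0, 0⟩,
  ⟨0, 0, -2, 0, 1, -1, 1, 1⟩,
  ⟨0, 0, -1, -1, 2, 0, 1, -1⟩,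
  ⟨0, 0, -1, 1, -1, -1, 2, 0⟩,
  ⟨0, 0, 2, 0, 1, -1, -1, -1⟩,
  ⟨0, 0, 0, 0, 0, 0, -4, 0⟩,
  ⟨0, 0, -2, 0, -1, 1, -1, -1⟩]

def Lv : List V := Lv_0 ++ Lv_1 ++ Lv_2 ++ Lv_3 ++ Lv_4 ++ Lv_5 ++ Lv_6 ++ Lv_7

/- ### The group over ℚ(√5) -/

def GK : Subgroup (Quaternion K)ˣ := Subgroup.closure {sU, tU}

def Lq : List (Quaternion K) := Lv.map toQ4

def P (e : V) : Prop := ∃ u : (Quaternion K)ˣ, u ∈ GK ∧ (u : Quaternion K) = toQ4 e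

def gstep (g : Bool) : V := cond g sv tv
def gstepU (g : Bool) : (Quaternion K)ˣ := cond g sU tU

lemma gstepU_val (g : Bool) : (gstepU g : Quaternion K) = toQ4 (gstep g) := by
  cases g <;> rfl

lemma gstepU_mem (g : Bool) : gstepU g ∈ GK := by
  cases g
  · exact Subgroup.subset_closure (by simp [gstepU])
  · exact Subgroup.subset_closure (by simp [gstepU])

def Valid : List (V × Bool × V) → List V → Prop
  | [], _ => True
  | (p, g, e) :: rest, acc => p ∈ acc ∧ vraw p (gstep g) = vscale4 e ∧ Valid rest (e :: acc)

def validDec : (st : List (V × Bool × V)) → (acc : List V) → Decidable (Valid st acc)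
  | [], _ => .isTrue trivial
  | (p, g, e) :: rest, acc =>
    letI := validDec rest (e :: acc)
    decidable_of_iff (p ∈ acc ∧ vraw p (gstep g) = vscale4 e ∧ Valid rest (e :: acc)) Iff.rfl

instance : ∀ (st : List (V × Bool × V)) (acc : List V), Decidable (Valid st acc) := validDec

lemma chain : ∀ (st : List (V × Bool × V)) (acc : List V), Valid st acc →
    (∀ e ∈ acc, P e) → ∀ e ∈ acc ++ st.map (fun x => x.2.2), P e := by
  intro st
  induction st with
  | nil => intro acc _ hacc e he; simp only [List.map_nil, List.append_nil] at he; exact hacc e he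
  | cons hd tl ih =>
    obtain ⟨p, g, e0⟩ := hd
    intro acc hv hacc e he
    obtain ⟨hp, hm, hv'⟩ := hv
    obtain ⟨u, hu, huval⟩ := hacc p hp
    have he0 : P e0 := ⟨u * gstepU g, mul_mem hu (gstepU_mem g), by
      rw [Units.val_mul, huval, gstepU_val, mulQ_of_vraw hm]⟩
    have hacc' : ∀ x ∈ e0 :: acc, P x := by
      intro x hx
      rcases List.mem_cons.mp hx with h | h
      · exact h ▸ he0
      · exact hacc x h
    apply ih (e0 :: acc) hv' hacc'
    simp only [List.mem_append, List.mem_cons, List.map_cons] at he ⊢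
    tauto

lemma lower : ∀ e ∈ Lv, P e := by
  have h1 : P vone := ⟨1, one_mem _, by rw [Units.val_one, toQ4_vone]⟩
  have hc := chain stepsList [vone] (by decide +kernel) (by
    intro e he
    simp only [List.mem_singleton] at he
    exact he ▸ h1)
  intro e he
  apply hc
  have hL : Lv = vone :: stepsList.map (fun x => x.2.2) := by decide +kernel
  rw [hL] at he
  simpa using he

lemma gens4_fact : ∀ g ∈ [sv, tv, starv sv, starv tv], ∀ a ∈ Lv,
    vraw g a ∈ Lv.map vscale4 := by decide +kernel

lemma one_mem_Lq : (1 : Quaternion K) ∈ Lq :=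
  List.mem_map.mpr ⟨vone, by decide +kernel, toQ4_vone⟩

lemma upper_aux : ∀ l : List (Quaternion K)ˣ,
    (∀ y ∈ l, y ∈ (({sU, tU} : Set (Quaternion K)ˣ) ∪ ({sU, tU} : Set (Quaternion K)ˣ)⁻¹)) →
    ((l.prod : (Quaternion K)ˣ) : Quaternion K) ∈ Lq := by
  intro l
  induction l with
  | nil => intro _; simpa using one_mem_Lq
  | cons y l ih =>
    intro hy
    have hprod := ih (fun z hz => hy z (List.mem_cons_of_mem y hz))
    obtain ⟨a, ha, hae⟩ := List.mem_map.mp hprod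
    have hgen : ∃ g ∈ [sv, tv, starv sv, starv tv], (y : Quaternion K) = toQ4 g := by
      have hmem := hy y List.mem_cons_self
      rcases hmem with h | h
      · rcases Set.mem_insert_iff.mp h with h' | h'
        · exact ⟨sv, by simp, by rw [h']; rfl⟩
        · rw [Set.mem_singleton_iff] at h'
          exact ⟨tv, by simp, by rw [h']; rfl⟩
      · rw [Set.mem_inv] at h
        rcases Set.mem_insert_iff.mp h with h' | h'
        · have : y = sU⁻¹ := by rw [← h']; simp
          refine ⟨starv sv, by simp, ?_⟩
          rw [this, toQ4_starv]
          rfl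
        · rw [Set.mem_singleton_iff] at h'
          have : y = tU⁻¹ := by rw [← h']; simp
          refine ⟨starv tv, by simp, ?_⟩
          rw [this, toQ4_starv]
          rfl
    obtain ⟨g, hg, hyval⟩ := hgen
    obtain ⟨b, hb, hbe⟩ := List.mem_map.mp (gens4_fact g hg a ha)
    have hmul : toQ4 g * toQ4 a = toQ4 b := by rw [← toQ16_vraw, ← hbe, toQ16_vscale4]
    rw [List.prod_cons, Units.val_mul, hyval, ← hae, hmul]
    exact List.mem_map_of_mem hb

lemma upper : ∀ u : (Quaternion K)ˣ, u ∈ GK → (u : Quaternion K) ∈ Lq := by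
  intro u hu
  have h : u ∈ GK.toSubmonoid := hu
  rw [GK, Subgroup.closure_toSubmonoid] at h
  obtain ⟨l, hl, hprod⟩ := Submonoid.exists_list_of_mem_closure h
  rw [← hprod]
  exact upper_aux l hl

lemma GK_carrier : (GK : Set (Quaternion K)ˣ) = {u : (Quaternion K)ˣ | (u : Quaternion K) ∈ Lq} := by
  ext u
  constructor
  · exact upper u
  · intro hu
    obtain ⟨a, ha, hae⟩ := List.mem_map.mp hu
    obtain ⟨w, hw, hwe⟩ := lower a ha
    have : u = w := Units.ext (by rw [hwe, hae])
    rw [this]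
    exact hw

lemma card_GK : Nat.card GK = 120 := by
  have e1 : Nat.card GK = Nat.card {u : (Quaternion K)ˣ | (u : Quaternion K) ∈ Lq} :=
    Nat.card_congr (Equiv.setCongr GK_carrier)
  have e2 : Nat.card {u : (Quaternion K)ˣ | (u : Quaternion K) ∈ Lq}
      = Nat.card {q : Quaternion K | q ∈ Lq} := by
    apply Nat.card_congr
    refine Equiv.ofBijective (fun u => ⟨(u : (Quaternion K)ˣ), u.2⟩) ⟨?_, ?_⟩
    · intro u v h
      exact Subtype.ext (Units.ext (congrArg Subtype.val h))
    · rintro ⟨q, hq⟩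
      obtain ⟨a, ha, hae⟩ := List.mem_map.mp hq
      obtain ⟨w, _, hwe⟩ := lower a ha
      refine ⟨⟨w, ?_⟩, ?_⟩
      · show (w : Quaternion K) ∈ Lq
        rw [hwe, hae]
        exact hq
      · exact Subtype.ext (by simpa [hae] using hwe)
  have e3 : Nat.card {q : Quaternion K | q ∈ Lq} = 120 := by
    have hset : {q : Quaternion K | q ∈ Lq} = ↑Lq.toFinset := (List.coe_toFinset Lq).symm
    have hnodup : Lq.Nodup := (by decide +kernel : Lv.Nodup).map toQ4_injective
    rw [hset, Nat.card_coe_set_eq, Set.ncard_coe_finset, List.card_toFinset, hnodup.dedup]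
    show (Lv.map toQ4).length = 120
    rw [List.length_map]
    decide +kernel
  rw [e1, e2, e3]

/- ### Transfer to ℝ -/

def PhiU : (Quaternion K)ˣ →* (Quaternion ℝ)ˣ := Units.map Phi.toMonoidHom

lemma PhiU_inj : Function.Injective PhiU := by
  intro u v h
  exact Units.ext (Phi_injective (congrArg Units.val h))

lemma PhiU_sU : ((PhiU sU : (Quaternion ℝ)ˣ) : Quaternion ℝ) = sQuat := Phi_sK
lemma PhiU_tU : ((PhiU tU : (Quaternion ℝ)ˣ) : Quaternion ℝ) = tQuat := Phi_tK

lemma bi_eq : binaryIcosahedral = Subgroup.map PhiU GK := by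
  rw [binaryIcosahedral, GK, MonoidHom.map_closure]
  congr 1
  ext u
  simp only [Set.image_insert_eq, Set.image_singleton, Set.mem_insert_iff,
    Set.mem_singleton_iff, Set.mem_setOf_eq]
  constructor
  · rintro (h | h)
    · left; exact Units.ext (by rw [h, ← PhiU_sU])
    · right; exact Units.ext (by rw [h, ← PhiU_tU])
  · rintro (rfl | rfl)
    · left; exact PhiU_sU
    · right; exact PhiU_tU

/-- In the binary icosahedral group one has s³ = t⁵ = (st)², this common element is
−1, and the group has exactly 120 elements. -/
theorem binaryIcosahedral_relations_card :
    sQuat ^ 3 = tQuat ^ 5 ∧ tQuat ^ 5 = (sQuat * tQuat) ^ 2 ∧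
    (sQuat * tQuat) ^ 2 = -1 ∧
    Nat.card binaryIcosahedral = 120 := by
  have hs : sQuat ^ 3 = -1 := by
    rw [← Phi_sK, ← map_pow, sK_pow, map_neg, map_one]
  have ht : tQuat ^ 5 = -1 := by
    rw [← Phi_tK, ← map_pow, tK_pow, map_neg, map_one]
  have hst : (sQuat * tQuat) ^ 2 = -1 := by
    rw [← Phi_sK, ← Phi_tK, ← map_mul, ← map_pow, stK_pow, map_neg, map_one]
  refine ⟨by rw [hs, ht], by rw [ht, hst], hst, ?_⟩
  rw [bi_eq]
  have := Nat.card_congr (GK.equivMapOfInjective PhiU PhiU_inj).toEquiv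
  rw [← this]
  exact card_GK
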